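/- Let 2 ≤ K ≤ 7, let Γ₁,…,Γ_K be d×d complex matrices that are Hermitian, unitary, and pairwise anticommuting, and let B₁,…,B_K and C₁,…,C_K be arbitrary D×D Hermitian unitary matrices. Then ‖∑_{k=1}^K ( Γₖ ⊗ (Bₖ ⊗ I_D + I_D ⊗ Cₖ) + I_d ⊗ Bₖ ⊗ Cₖ )‖ ≤ K + 2√K. (Consequently the winning probability of the no-cloning game for the Clifford encryption scheme with K keys is at most 1/2 + 1/(2√K) for these K.) -/

import Mathlib

set_option maxHeartbeats 1000000

open RCLike Finset
open scoped Kronecker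

local notation "⟪" x ", " y "⟫" => @inner ℂ _ _ x y


open RCLike Finset


lemma selfadj_norm_le {E : Type*} [NormedAddCommGroup E] [InnerProductSpace ℂ E]
    [CompleteSpace E] (T : E →L[ℂ] E) (hT : IsSelfAdjoint T) {c : ℝ} (hc : 0 ≤ c)
    (hup : ∀ x : E, ‖x‖ = 1 → re ⟪x, T x⟫ ≤ c)
    (hlow : ∀ x : E, ‖x‖ = 1 → -c ≤ re ⟪x, T x⟫) : ‖T‖ ≤ c := by
  have habs : ∀ x : E, |re ⟪x, T x⟫| ≤ c * ‖x‖ ^ 2 := by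
    intro x
    rcases eq_or_ne x 0 with rfl | hx
    · simp
    · have hxn : (0:ℝ) < ‖x‖ := norm_pos_iff.mpr hx
      set ψ : E := ((‖x‖⁻¹ : ℝ) : ℂ) • x with hψ
      have hψn : ‖ψ‖ = 1 := by
        rw [hψ, norm_smul]
        simp [abs_of_nonneg (inv_nonneg.mpr hxn.le), inv_mul_cancel₀ hxn.ne']
      have hx' : x = ((‖x‖ : ℝ) : ℂ) • ψ := by
        rw [hψ, smul_smul, ← Complex.ofReal_mul, mul_inv_cancel₀ hxn.ne']
        simp
      have hform : re ⟪x, T x⟫ = ‖x‖ ^ 2 * re ⟪ψ, T ψ⟫ := by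
        conv_lhs => rw [hx']
        rw [map_smul, inner_smul_left, inner_smul_right, Complex.conj_ofReal,
          ← mul_assoc, ← Complex.ofReal_mul]
        simp only [RCLike.re_to_complex, Complex.re_ofReal_mul]
        ring
      have h1 := hup ψ hψn
      have h2 := hlow ψ hψn
      rw [abs_le, hform]
      constructor <;> nlinarith [sq_nonneg ‖x‖]
  have key : ∀ x y : E, re ⟪y, T x⟫ ≤ c / 2 * (‖x‖ ^ 2 + ‖y‖ ^ 2) := by
    intro x y
    have hsym : ∀ a b : E, re ⟪a, T b⟫ = re ⟪b, T a⟫ := by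
      intro a b
      have h1 : ⟪a, T b⟫ = ⟪T a, b⟫ := by
        conv_lhs => rw [← hT.adjoint_eq]
        exact ContinuousLinearMap.adjoint_inner_right T a b
      rw [h1, inner_re_symm]
    have hpol : 4 * re ⟪y, T x⟫ =
        re ⟪x + y, T (x + y)⟫ - re ⟪x - y, T (x - y)⟫ := by
      have e1 : ⟪x + y, T (x + y)⟫ = ⟪x, T x⟫ + ⟪x, T y⟫ + ⟪y, T x⟫ + ⟪y, T y⟫ := by
        rw [map_add, inner_add_left, inner_add_right, inner_add_right]; ring
      have e2 : ⟪x - y, T (x - y)⟫ = ⟪x, T x⟫ - ⟪x, T y⟫ - ⟪y, T x⟫ + ⟪y, T y⟫ := by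
        rw [map_sub, inner_sub_left, inner_sub_right, inner_sub_right]; ring
      rw [e1, e2]
      simp only [map_add, map_sub]
      have := hsym x y
      linarith
    have hb1 : re ⟪x + y, T (x + y)⟫ ≤ c * ‖x + y‖ ^ 2 :=
      (le_abs_self _).trans (habs _)
    have hb2 : -(c * ‖x - y‖ ^ 2) ≤ re ⟪x - y, T (x - y)⟫ :=
      (neg_le_of_abs_le (habs _))
    have hpar : ‖x + y‖ * ‖x + y‖ + ‖x - y‖ * ‖x - y‖
        = 2 * (‖x‖ * ‖x‖ + ‖y‖ * ‖y‖) := by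
      have h := parallelogram_law_with_norm ℂ x y; simp only [sq] at h; exact h
    nlinarith [hpar]
  refine T.opNorm_le_bound hc ?_
  intro x
  rcases eq_or_ne (T x) 0 with h0 | h0
  · rw [h0, norm_zero]; positivity
  · rcases eq_or_ne x 0 with rfl | hx
    · simp at h0
    · have hxn : (0:ℝ) < ‖x‖ := norm_pos_iff.mpr hx
      have hTn : (0:ℝ) < ‖T x‖ := norm_pos_iff.mpr h0
      set y : E := ((‖x‖ / ‖T x‖ : ℝ) : ℂ) • T x with hy
      have hyn : ‖y‖ = ‖x‖ := by
        rw [hy, norm_smul]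
        simp [abs_of_nonneg (div_nonneg hxn.le hTn.le), div_mul_cancel₀ _ hTn.ne']
      have hin : re ⟪y, T x⟫ = ‖x‖ * ‖T x‖ := by
        rw [hy, inner_smul_left, Complex.conj_ofReal]
        simp only [RCLike.re_to_complex, Complex.re_ofReal_mul]
        rw [show (⟪T x, T x⟫).re = re ⟪T x, T x⟫ from rfl, inner_self_eq_norm_sq]
        field_simp
      have := key x y
      rw [hin, hyn] at this
      nlinarith





lemma abstract_bound {E : Type*} [NormedAddCommGroup E] [InnerProductSpace ℂ E]
    (K : ℕ) (hK : (K:ℝ) - 2 ≤ 2 * Real.sqrt K)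
    (w : E) (u v : Fin K → E) (hw : ‖w‖ = 1) (hu : ∀ k, ‖u k‖ = 1)
    (hv : ∀ k, ‖v k‖ = 1)
    (horth : ∀ j k, j ≠ k → re ⟪u j, v k⟫ = 0) :
    ∑ k, (re ⟪w, u k⟫ + re ⟪w, v k⟫ + re ⟪u k, v k⟫) ≤ K + 2 * Real.sqrt K := by
  set p : E := ∑ k, (u k + v k) with hp
  set dd : E := ∑ k, (u k - v k) with hdd
  set δ : Fin K → ℝ := fun k => ‖u k - v k‖ with hδ
  set S : ℝ := ∑ k, δ k ^ 2 with hS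
  have hδ0 : ∀ k, 0 ≤ δ k := fun k => norm_nonneg _
  have hS0 : 0 ≤ S := Finset.sum_nonneg fun k _ => sq_nonneg _
  have h1 : ∀ k, 2 * re ⟪u k, v k⟫ = 2 - δ k ^ 2 := by
    intro k
    have := @norm_sub_sq ℂ _ _ _ _ (u k) (v k)
    rw [hu, hv] at this
    simp only [hδ]
    nlinarith [this]
  -- pointwise identity
  have hpoint : ∀ j k, re ⟪u j + v j, u k + v k⟫ =
      re ⟪u j - v j, u k - v k⟫ + (if j = k then 4 * re ⟪u k, v k⟫ else 0) := by
    intro j k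
    have expand1 : re ⟪u j + v j, u k + v k⟫ =
        re ⟪u j, u k⟫ + re ⟪u j, v k⟫ + re ⟪v j, u k⟫ + re ⟪v j, v k⟫ := by
      rw [inner_add_left, inner_add_right, inner_add_right]
      simp only [map_add]
      ring
    have expand2 : re ⟪u j - v j, u k - v k⟫ =
        re ⟪u j, u k⟫ - re ⟪u j, v k⟫ - re ⟪v j, u k⟫ + re ⟪v j, v k⟫ := by
      rw [inner_sub_left, inner_sub_right, inner_sub_right]
      simp only [map_sub]
      ring
    by_cases h : j = k
    · subst h
      simp only [expand1, expand2, if_true, eq_self_iff_true]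
      have : re ⟪v j, u j⟫ = re ⟪u j, v j⟫ := inner_re_symm _ _
      linarith
    · have o1 : re ⟪u j, v k⟫ = 0 := horth j k h
      have o2 : re ⟪v j, u k⟫ = 0 := by
        rw [inner_re_symm]
        exact horth k j (Ne.symm h)
      simp only [if_neg h, expand1, expand2, o1, o2]
      ring
  have hpnorm : ‖p‖ ^ 2 = ‖dd‖ ^ 2 + (4 * K - 2 * S) := by
    have e1 : (‖p‖:ℝ) ^ 2 = ∑ j, ∑ k, re ⟪u j + v j, u k + v k⟫ := by
      rw [← inner_self_eq_norm_sq (𝕜 := ℂ), hp, sum_inner]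
      rw [map_sum]
      refine Finset.sum_congr rfl fun j _ => ?_
      rw [inner_sum, map_sum]
    have e2 : (‖dd‖:ℝ) ^ 2 = ∑ j, ∑ k, re ⟪u j - v j, u k - v k⟫ := by
      rw [← inner_self_eq_norm_sq (𝕜 := ℂ), hdd, sum_inner]
      rw [map_sum]
      refine Finset.sum_congr rfl fun j _ => ?_
      rw [inner_sum, map_sum]
    have e3 : ∑ j, ∑ k, re ⟪u j + v j, u k + v k⟫ =
        (∑ j, ∑ k, re ⟪u j - v j, u k - v k⟫) +
          ∑ k : Fin K, 4 * re ⟪u k, v k⟫ := by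
      rw [← Finset.sum_add_distrib]
      refine Finset.sum_congr rfl fun j _ => ?_
      rw [Finset.sum_congr rfl fun k _ => hpoint j k, Finset.sum_add_distrib]
      congr 1
      simp
    have e4 : ∑ k : Fin K, 4 * re ⟪u k, v k⟫ = 4 * K - 2 * S := by
      have : ∀ k : Fin K, 4 * re ⟪u k, v k⟫ = 4 - 2 * δ k ^ 2 := by
        intro k; have := h1 k; linarith
      rw [Finset.sum_congr rfl fun k _ => this k, Finset.sum_sub_distrib]
      simp [hS, Finset.mul_sum, Finset.card_univ, mul_comm]
    rw [e1, e2, e3, e4]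
  have hd : ‖dd‖ ≤ ∑ k, δ k := by
    rw [hdd]
    exact norm_sum_le _ _
  have hcs : (∑ k, δ k) ^ 2 ≤ K * S := by
    have := Finset.sum_mul_sq_le_sq_mul_sq Finset.univ (fun _ : Fin K => (1:ℝ)) δ
    simpa [hS, Finset.card_univ] using this
  have hsqK : Real.sqrt K ^ 2 = K := Real.sq_sqrt (Nat.cast_nonneg K)
  have hsK0 : 0 ≤ Real.sqrt K := Real.sqrt_nonneg _
  have hple : ‖p‖ ≤ 2 * Real.sqrt K + S / 2 := by
    have hdd2 : ‖dd‖ ^ 2 ≤ K * S := by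
      have h' : ‖dd‖ ^ 2 ≤ (∑ k, δ k) ^ 2 := by
        have hsum0 : 0 ≤ ∑ k, δ k := Finset.sum_nonneg fun k _ => hδ0 k
        nlinarith [norm_nonneg dd]
      exact h'.trans hcs
    have hp2 : ‖p‖ ^ 2 ≤ (2 * Real.sqrt K + S / 2) ^ 2 := by
      rw [hpnorm]
      nlinarith [mul_nonneg hS0 (sub_nonneg.mpr hK)]
    nlinarith [norm_nonneg p, hsK0, hS0]
  have hobj : ∑ k, (re ⟪w, u k⟫ + re ⟪w, v k⟫ + re ⟪u k, v k⟫) =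
      re ⟪w, p⟫ + ∑ k, re ⟪u k, v k⟫ := by
    rw [hp, inner_sum, map_sum, ← Finset.sum_add_distrib]
    refine Finset.sum_congr rfl fun k _ => ?_
    rw [inner_add_right, map_add]
  have hsum2 : ∑ k, re ⟪u k, v k⟫ = K - S / 2 := by
    have : ∀ k : Fin K, re ⟪u k, v k⟫ = 1 - δ k ^ 2 / 2 := by
      intro k; have := h1 k; linarith
    rw [Finset.sum_congr rfl fun k _ => this k, Finset.sum_sub_distrib]
    simp only [Finset.sum_const, Finset.card_univ, Fintype.card_fin, nsmul_eq_mul, mul_one]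
    rw [hS, Finset.sum_div]
  have hwp : re ⟪w, p⟫ ≤ ‖p‖ := by
    have := re_inner_le_norm (𝕜 := ℂ) w p
    rwa [hw, one_mul] at this
  rw [hobj, hsum2]
  linarith


open Matrix
open scoped Matrix.Norms.L2Operator Kronecker

lemma kron_conjTranspose {l m : Type*} (A : Matrix l l ℂ) (B : Matrix m m ℂ) :
    (A ⊗ₖ B)ᴴ = Aᴴ ⊗ₖ Bᴴ := by
  ext ⟨i, j⟩ ⟨k, l'⟩
  simp [Matrix.conjTranspose_apply, Matrix.kroneckerMap_apply, mul_comm]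

lemma kron3_mul {α β γ : Type*} [Fintype α] [Fintype β] [Fintype γ]
    (A₁ B₁ : Matrix α α ℂ) (A₂ B₂ : Matrix β β ℂ) (A₃ B₃ : Matrix γ γ ℂ) :
    (A₁ ⊗ₖ (A₂ ⊗ₖ A₃)) * (B₁ ⊗ₖ (B₂ ⊗ₖ B₃))
      = (A₁ * B₁) ⊗ₖ ((A₂ * B₂) ⊗ₖ (A₃ * B₃)) := by
  rw [Matrix.mul_kronecker_mul, Matrix.mul_kronecker_mul]




/-- For `2 ≤ K ≤ 7`, a Clifford family `Γ₁, …, Γ_K` (Hermitian,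
unitary, pairwise anticommuting `d × d` matrices), and arbitrary `D × D` Hermitian
unitaries `B₁,…,B_K`, `C₁,…,C_K`, the game operator
`∑ₖ (Γₖ ⊗ (Bₖ ⊗ I_D + I_D ⊗ Cₖ) + I_d ⊗ Bₖ ⊗ Cₖ)` has operator norm at most
`K + 2√K` — hence the no-cloning game value is at most `1/2 + 1/(2√K)` for these `K`. -/
theorem stmt10 (K d D : ℕ) (hK2 : 2 ≤ K) (hK7 : K ≤ 7)
    (Γ : Fin K → Matrix (Fin d) (Fin d) ℂ)
    (hherm : ∀ k, (Γ k).IsHermitian)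
    (hunit : ∀ k, Γ k * Γ k = 1)
    (hanti : ∀ i j, i ≠ j → Γ i * Γ j + Γ j * Γ i = 0)
    (B C : Fin K → Matrix (Fin D) (Fin D) ℂ)
    (hBherm : ∀ k, (B k).IsHermitian) (hBunit : ∀ k, B k * B k = 1)
    (hCherm : ∀ k, (C k).IsHermitian) (hCunit : ∀ k, C k * C k = 1) :
    ‖∑ k, (Γ k ⊗ₖ (B k ⊗ₖ (1 : Matrix (Fin D) (Fin D) ℂ)
            + (1 : Matrix (Fin D) (Fin D) ℂ) ⊗ₖ C k)
          + (1 : Matrix (Fin d) (Fin d) ℂ) ⊗ₖ (B k ⊗ₖ C k))‖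
      ≤ K + 2 * Real.sqrt K := by
  have hsK0 : (0:ℝ) ≤ Real.sqrt K := Real.sqrt_nonneg _
  have hsqK : Real.sqrt K ^ 2 = K := Real.sq_sqrt (Nat.cast_nonneg K)
  have hK : (K:ℝ) - 2 ≤ 2 * Real.sqrt K := by
    have h7 : (K:ℝ) ≤ 7 := by exact_mod_cast hK7
    have h2 : (2:ℝ) ≤ K := by exact_mod_cast hK2
    nlinarith [hsqK, hsK0]
  have hc : (0:ℝ) ≤ K + 2 * Real.sqrt K := by positivity
  -- the three families of Hermitian unitaries
  set X : Fin K → Matrix (Fin d × Fin D × Fin D) (Fin d × Fin D × Fin D) ℂ :=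
    fun k => Γ k ⊗ₖ (B k ⊗ₖ (1 : Matrix (Fin D) (Fin D) ℂ)) with hX
  set Y : Fin K → Matrix (Fin d × Fin D × Fin D) (Fin d × Fin D × Fin D) ℂ :=
    fun k => Γ k ⊗ₖ ((1 : Matrix (Fin D) (Fin D) ℂ) ⊗ₖ C k) with hY
  set M : Fin K → Matrix (Fin d × Fin D × Fin D) (Fin d × Fin D × Fin D) ℂ :=
    fun k => (1 : Matrix (Fin d) (Fin d) ℂ) ⊗ₖ (B k ⊗ₖ C k) with hM
  have hXY : ∀ j k, X j * Y k = (Γ j * Γ k) ⊗ₖ (B j ⊗ₖ C k) := by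
    intro j k; rw [hX, hY]; rw [kron3_mul]; rw [mul_one, one_mul]
  have hYX : ∀ j k, Y j * X k = (Γ j * Γ k) ⊗ₖ (B k ⊗ₖ C j) := by
    intro j k; rw [hX, hY]; rw [kron3_mul]; rw [mul_one, one_mul]
  have hXYk : ∀ k, X k * Y k = M k := by
    intro k; rw [hXY k k, hunit k, hM]
  have hYXk : ∀ k, Y k * X k = M k := by
    intro k; rw [hYX k k, hunit k, hM]
  have hXX : ∀ k, X k * X k = 1 := by
    intro k; rw [hX]; rw [kron3_mul, hunit k, hBunit k, one_mul,
      Matrix.one_kronecker_one, Matrix.one_kronecker_one]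
  have hYY : ∀ k, Y k * Y k = 1 := by
    intro k; rw [hY]; rw [kron3_mul, hunit k, hCunit k, one_mul,
      Matrix.one_kronecker_one, Matrix.one_kronecker_one]
  have hXM : ∀ k, X k * M k = Y k := by
    intro k; rw [hX, hM]; rw [kron3_mul, mul_one, hBunit k, one_mul, hY]
  have hMX : ∀ k, M k * X k = Y k := by
    intro k; rw [hX, hM]; rw [kron3_mul, one_mul, hBunit k, mul_one, hY]
  have hYM : ∀ k, Y k * M k = X k := by
    intro k; rw [hY, hM]; rw [kron3_mul, mul_one, hCunit k, one_mul, hX]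
  have hMY : ∀ k, M k * Y k = X k := by
    intro k; rw [hY, hM]; rw [kron3_mul, one_mul, hCunit k, mul_one, hX]
  have hMM : ∀ k, M k * M k = 1 := by
    intro k; rw [hM]; rw [kron3_mul, one_mul, hBunit k, hCunit k,
      Matrix.one_kronecker_one, Matrix.one_kronecker_one]
  have hanti' : ∀ j k, j ≠ k → X j * Y k + Y k * X j = 0 := by
    intro j k hjk
    rw [hXY j k, hYX k j, ← Matrix.add_kronecker, hanti j k hjk,
      Matrix.zero_kronecker]
  have hXH : ∀ k, (X k)ᴴ = X k := by
    intro k; rw [hX]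
    rw [kron_conjTranspose, kron_conjTranspose, Matrix.conjTranspose_one,
      (hherm k).eq, (hBherm k).eq]
  have hYH : ∀ k, (Y k)ᴴ = Y k := by
    intro k; rw [hY]
    rw [kron_conjTranspose, kron_conjTranspose, Matrix.conjTranspose_one,
      (hherm k).eq, (hCherm k).eq]
  have hMH : ∀ k, (M k)ᴴ = M k := by
    intro k; rw [hM]
    rw [kron_conjTranspose, kron_conjTranspose, Matrix.conjTranspose_one,
      (hBherm k).eq, (hCherm k).eq]
  have hTeq : (∑ k, (Γ k ⊗ₖ (B k ⊗ₖ (1 : Matrix (Fin D) (Fin D) ℂ)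
            + (1 : Matrix (Fin D) (Fin D) ℂ) ⊗ₖ C k)
          + (1 : Matrix (Fin d) (Fin d) ℂ) ⊗ₖ (B k ⊗ₖ C k)))
      = ∑ k, (X k + Y k + M k) := by
    refine Finset.sum_congr rfl fun k _ => ?_
    rw [Matrix.kronecker_add, hX, hY, hM]
  rw [hTeq]
  set T : Matrix (Fin d × Fin D × Fin D) (Fin d × Fin D × Fin D) ℂ :=
    ∑ k, (X k + Y k + M k) with hT
  rw [Matrix.cstar_norm_def]
  set e := Matrix.toEuclideanCLM (𝕜 := ℂ) (n := Fin d × Fin D × Fin D) with he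
  -- selfadjointness transfer
  have hsa : ∀ A : Matrix (Fin d × Fin D × Fin D) (Fin d × Fin D × Fin D) ℂ,
      Aᴴ = A → _root_.IsSelfAdjoint (e A) := by
    intro A hA
    rw [_root_.IsSelfAdjoint]
    calc star (e A) = e (star A) := (StarHomClass.map_star e A).symm
      _ = e A := by rw [Matrix.star_eq_conjTranspose, hA]
  have hmove : ∀ (A : Matrix (Fin d × Fin D × Fin D) (Fin d × Fin D × Fin D) ℂ),
      Aᴴ = A → ∀ x y : EuclideanSpace ℂ (Fin d × Fin D × Fin D),
        ⟪x, e A y⟫ = ⟪e A x, y⟫ := by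
    intro A hA x y
    conv_lhs => rw [← (hsa A hA).adjoint_eq]
    exact ContinuousLinearMap.adjoint_inner_right _ x y
  have hTH : Tᴴ = T := by
    rw [hT, Matrix.conjTranspose_sum]
    refine Finset.sum_congr rfl fun k _ => ?_
    rw [Matrix.conjTranspose_add, Matrix.conjTranspose_add, hXH k, hYH k, hMH k]
  have hTsa : _root_.IsSelfAdjoint (e T) := hsa T hTH
  -- quadratic form bounds
  have hup : ∀ x : EuclideanSpace ℂ (Fin d × Fin D × Fin D), ‖x‖ = 1 →
      re ⟪x, e T x⟫ ≤ (K:ℝ) + 2 * Real.sqrt K := by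
    intro x hx1
    have hpair : ∀ A A' : Matrix (Fin d × Fin D × Fin D) (Fin d × Fin D × Fin D) ℂ,
        Aᴴ = A → ⟪e A x, e A' x⟫ = ⟪x, e (A * A') x⟫ := by
      intro A A' hA
      rw [← hmove A hA x (e A' x), _root_.map_mul, ContinuousLinearMap.mul_apply]
    have hnorm1 : ∀ A : Matrix (Fin d × Fin D × Fin D) (Fin d × Fin D × Fin D) ℂ,
        Aᴴ = A → A * A = 1 → ‖e A x‖ = 1 := by
      intro A hA hAA
      have h : ⟪e A x, e A x⟫ = ⟪x, x⟫ := by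
        rw [hpair A A hA, hAA, _root_.map_one, ContinuousLinearMap.one_apply]
      have h2 : ‖e A x‖ ^ 2 = 1 := by
        have := congrArg re h
        rw [inner_self_eq_norm_sq, inner_self_eq_norm_sq, hx1] at this
        simpa using this
      rw [← Real.sqrt_sq (norm_nonneg (e A x)), h2, Real.sqrt_one]
    have horth : ∀ j k, j ≠ k → re ⟪e (X j) x, e (Y k) x⟫ = 0 := by
      intro j k hjk
      have h1 : ⟪e (X j) x, e (Y k) x⟫ + ⟪e (Y k) x, e (X j) x⟫ = 0 := by
        rw [hpair (X j) (Y k) (hXH j), hpair (Y k) (X j) (hYH k),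
          ← inner_add_right, ← ContinuousLinearMap.add_apply, ← _root_.map_add,
          hanti' j k hjk, _root_.map_zero, ContinuousLinearMap.zero_apply,
          inner_zero_right]
      have h2 : re ⟪e (X j) x, e (Y k) x⟫ + re ⟪e (Y k) x, e (X j) x⟫ = 0 := by
        have := congrArg re h1
        simpa using this
      have h3 : re ⟪e (Y k) x, e (X j) x⟫ = re ⟪e (X j) x, e (Y k) x⟫ :=
        inner_re_symm _ _
      linarith
    have hform : re ⟪x, e T x⟫ =
        ∑ k, (re ⟪x, e (X k) x⟫ + re ⟪x, e (Y k) x⟫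
          + re ⟪e (X k) x, e (Y k) x⟫) := by
      have h : ⟪x, e T x⟫ = ∑ k, (⟪x, e (X k) x⟫ + ⟪x, e (Y k) x⟫
          + ⟪e (X k) x, e (Y k) x⟫) := by
        rw [hT, _root_.map_sum, ContinuousLinearMap.sum_apply, inner_sum]
        refine Finset.sum_congr rfl fun k _ => ?_
        rw [_root_.map_add, _root_.map_add, ContinuousLinearMap.add_apply,
          ContinuousLinearMap.add_apply, inner_add_right, inner_add_right]
        congr 1
        rw [hpair (X k) (Y k) (hXH k), hXYk k]
      rw [h, _root_.map_sum]
      refine Finset.sum_congr rfl fun k _ => ?_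
      simp
    rw [hform]
    exact abstract_bound K hK x (fun k => e (X k) x) (fun k => e (Y k) x) hx1
      (fun k => hnorm1 (X k) (hXH k) (hXX k))
      (fun k => hnorm1 (Y k) (hYH k) (hYY k)) horth
  have hlow : ∀ x : EuclideanSpace ℂ (Fin d × Fin D × Fin D), ‖x‖ = 1 →
      -((K:ℝ) + 2 * Real.sqrt K) ≤ re ⟪x, e T x⟫ := by
    intro x hx1
    have hpair : ∀ A A' : Matrix (Fin d × Fin D × Fin D) (Fin d × Fin D × Fin D) ℂ,
        Aᴴ = A → ⟪e A x, e A' x⟫ = ⟪x, e (A * A') x⟫ := by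
      intro A A' hA
      rw [← hmove A hA x (e A' x), _root_.map_mul, ContinuousLinearMap.mul_apply]
    have hterm : ∀ k, -1 ≤ re ⟪x, e (X k + Y k + M k) x⟫ := by
      intro k
      set Q : Matrix (Fin d × Fin D × Fin D) (Fin d × Fin D × Fin D) ℂ :=
        X k + Y k + M k + 1 with hQ
      have hQH : Qᴴ = Q := by
        rw [hQ, Matrix.conjTranspose_add, Matrix.conjTranspose_add,
          Matrix.conjTranspose_add, Matrix.conjTranspose_one, hXH k, hYH k, hMH k]
      have hQQ : Q * Q = Q + Q + Q + Q := by
        rw [hQ]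
        simp only [mul_add, add_mul, one_mul, mul_one, hXX k, hXYk k, hYXk k,
          hYY k, hXM k, hMX k, hYM k, hMY k, hMM k]
        abel
      have hqpos : 0 ≤ re ⟪x, e Q x⟫ := by
        have h4 : re ⟪x, e (Q * Q) x⟫ = 4 * re ⟪x, e Q x⟫ := by
          rw [hQQ]
          simp only [_root_.map_add, ContinuousLinearMap.add_apply, inner_add_right]
          ring
        have h5 : re ⟪x, e (Q * Q) x⟫ = ‖e Q x‖ ^ 2 := by
          rw [← hpair Q Q hQH, inner_self_eq_norm_sq]
        nlinarith [sq_nonneg ‖e Q x‖]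
      have hsplit : re ⟪x, e Q x⟫ = re ⟪x, e (X k + Y k + M k) x⟫ + 1 := by
        rw [hQ, _root_.map_add, ContinuousLinearMap.add_apply, inner_add_right,
          _root_.map_one, ContinuousLinearMap.one_apply, _root_.map_add]
        have : re ⟪x, x⟫ = 1 := by rw [inner_self_eq_norm_sq, hx1]; norm_num
        rw [this]
      linarith
    have hsum : re ⟪x, e T x⟫ = ∑ k, re ⟪x, e (X k + Y k + M k) x⟫ := by
      rw [hT, _root_.map_sum, ContinuousLinearMap.sum_apply, inner_sum, _root_.map_sum]
    rw [hsum]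
    have h1 : -(K:ℝ) ≤ ∑ k, re ⟪x, e (X k + Y k + M k) x⟫ := by
      calc -(K:ℝ) = ∑ _k : Fin K, (-1 : ℝ) := by
            simp
        _ ≤ _ := Finset.sum_le_sum fun k _ => hterm k
    linarith
  exact selfadj_norm_le (e T) hTsa hc hup hlow
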